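/- Recovery of the enumerated set from a length-bounded representation: let a : ℕ → ℕ be injective, let ĝ : 2^{<ω} → 2^{<ω} be monotone (σ ⪯ τ implies ĝ(σ) ⪯ ĝ(τ)), and let y ∈ 2^ω be such that the lengths |ĝ(y↾i)| are unbounded in i. Suppose there is j₀ such that |ĝ(y↾i)| ≤ a(i+1) for all i > j₀. Then for every n, letting t_n be the least t > j₀ with |ĝ(y↾t)| > n (which exists), we have: n ∈ range(a) if and only if n ∈ {a(0), a(1), …, a(t_n)}. -/
import Mathlib


/-- The length-`n` prefix of a real `x : ℕ → Bool`, as a finite binary string. -/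
def pre (x : ℕ → Bool) (n : ℕ) : List Bool := (List.range n).map x

lemma pre_prefix (x : ℕ → Bool) {m n : ℕ} (h : m ≤ n) : pre x m <+: pre x n := by
  have : pre x m = (pre x n).take m := by
    rw [pre, pre, ← List.map_take, List.take_range, Nat.min_eq_left h]
  rw [this]
  exact List.take_prefix _ _

/-- Recovery of the enumerated set from a length-bounded representation:
if `a` is injective, `g` is monotone for the prefix order, the lengths
`|g(y↾i)|` are unbounded, and `|g(y↾i)| ≤ a(i+1)` for all `i > j₀`, then for
each `n`, letting `t_n` be the least `t > j₀` with `|g(y↾t)| > n` (which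
exists), we have `n ∈ range a ↔ n ∈ {a 0, …, a t_n}`. -/
theorem recover_range_from_bounded_representation
    (a : ℕ → ℕ) (ha : Function.Injective a)
    (g : List Bool → List Bool)
    (hmono : ∀ σ τ : List Bool, σ <+: τ → g σ <+: g τ)
    (y : ℕ → Bool)
    (hunb : ∀ N : ℕ, ∃ i, N < (g (pre y i)).length)
    (j₀ : ℕ) (hbd : ∀ i > j₀, (g (pre y i)).length ≤ a (i + 1)) :
    ∀ n : ℕ, ∃ t,
      (j₀ < t ∧ n < (g (pre y t)).length ∧
        ∀ s, j₀ < s → n < (g (pre y s)).length → t ≤ s) ∧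
      (n ∈ Set.range a ↔ ∃ i ≤ t, a i = n) := by
  intro n
  have hlen : ∀ {m m' : ℕ}, m ≤ m' → (g (pre y m)).length ≤ (g (pre y m')).length :=
    fun h => (hmono _ _ (pre_prefix y h)).length_le
  have hex : ∃ t, j₀ < t ∧ n < (g (pre y t)).length := by
    obtain ⟨i, hi⟩ := hunb n
    exact ⟨max i (j₀ + 1), by omega, lt_of_lt_of_le hi (hlen (le_max_left _ _))⟩
  classical
  have ht := Nat.find_spec hex
  refine ⟨Nat.find hex, ⟨ht.1, ht.2, fun s hs hns => Nat.find_min' hex ⟨hs, hns⟩⟩, ?_⟩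
  constructor
  · rintro ⟨k, rfl⟩
    refine ⟨k, ?_, rfl⟩
    by_contra hk
    push_neg at hk
    have hk1 : k - 1 > j₀ := by omega
    have h1 : (g (pre y (k - 1))).length ≤ a k := by
      have := hbd (k - 1) hk1
      rwa [Nat.sub_add_cancel (by omega)] at this
    have h2 : (g (pre y (Nat.find hex))).length ≤ (g (pre y (k - 1))).length := hlen (by omega)
    omega
  · rintro ⟨i, _, rfl⟩
    exact ⟨i, rfl⟩
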